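/- Let A and B be unital Banach algebras (or topological Q-algebras) and f : A → B a continuous algebra morphism with dense image which is n-full (i.e. f_n^{-1}(Lg_n(B)) ⊆ Lg_n(A)). If Bsr(B) ≤ n, then Bsr(A) ≤ n. -/
import Mathlib


/-- `Lg n A`: the set of `n`-tuples generating `A` as a left ideal. -/
def Lg (A : Type*) [Ring A] (n : ℕ) : Set (Fin n → A) :=
  {a | ∃ w : Fin n → A, ∑ i, w i * a i = 1}

/-- If `f : A → B` is a continuous dense `n`-full morphism of unital Banach algebras and
`Bsr(B) ≤ n`, then `Bsr(A) ≤ n`. -/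
theorem stmt_11 (A B : Type*) [NormedRing A] [NormedAlgebra ℂ A] [CompleteSpace A]
    [NormedRing B] [NormedAlgebra ℂ B] [CompleteSpace B]
    (f : A →+* B) (hfc : Continuous f) (hfd : DenseRange f)
    (n : ℕ)
    (hfull : ∀ a : Fin n → A, (fun i => f (a i)) ∈ Lg B n → a ∈ Lg A n)
    (hBsrB : ∀ b : Fin (n + 1) → B, b ∈ Lg B (n + 1) →
      ∃ d : Fin n → B, (fun i : Fin n => b i.castSucc + d i * b (Fin.last n)) ∈ Lg B n) :
    ∀ a : Fin (n + 1) → A, a ∈ Lg A (n + 1) →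
      ∃ c : Fin n → A, (fun i : Fin n => a i.castSucc + c i * a (Fin.last n)) ∈ Lg A n := by
  intro a ha
  obtain ⟨w, hw⟩ := ha
  have hfa : (fun i => f (a i)) ∈ Lg B (n + 1) := by
    refine ⟨fun i => f (w i), ?_⟩
    simp only [← map_mul, ← map_sum, hw, map_one]
  obtain ⟨d, v, hv⟩ := hBsrB _ hfa
  set L : B := f (a (Fin.last n)) with hL
  set S : ℝ := ∑ i, ‖v i‖ with hS
  have hS0 : 0 ≤ S := Finset.sum_nonneg fun i _ => norm_nonneg _
  set ε : ℝ := 1 / ((S + 1) * (‖L‖ + 1)) with hε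
  have hεpos : 0 < ε := by positivity
  have hc : ∀ i : Fin n, ∃ c : A, dist (d i) (f c) < ε := fun i =>
    hfd.exists_dist_lt _ hεpos
  choose c hcd using hc
  refine ⟨c, hfull _ ?_⟩
  -- The perturbed tuple in B
  set s : B := ∑ i, v i * ((f (c i) - d i) * L) with hs
  have hsnorm : ‖s‖ < 1 := by
    calc ‖s‖ ≤ ∑ i, ‖v i * ((f (c i) - d i) * L)‖ := norm_sum_le _ _
      _ ≤ ∑ i, ‖v i‖ * (ε * ‖L‖) := by
          refine Finset.sum_le_sum fun i _ => ?_
          calc ‖v i * ((f (c i) - d i) * L)‖ ≤ ‖v i‖ * ‖(f (c i) - d i) * L‖ :=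
                norm_mul_le _ _
            _ ≤ ‖v i‖ * (‖f (c i) - d i‖ * ‖L‖) := by
                exact mul_le_mul_of_nonneg_left (norm_mul_le _ _) (norm_nonneg _)
            _ ≤ ‖v i‖ * (ε * ‖L‖) := by
                have : ‖f (c i) - d i‖ < ε := by
                  rw [← dist_eq_norm, dist_comm]; exact hcd i
                exact mul_le_mul_of_nonneg_left
                  (mul_le_mul_of_nonneg_right this.le (norm_nonneg _)) (norm_nonneg _)
      _ = S * (ε * ‖L‖) := by rw [← Finset.sum_mul]
      _ < 1 := by
          have h1 : S * ‖L‖ < (S + 1) * (‖L‖ + 1) := by nlinarith [norm_nonneg L]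
          have h2 : 0 < (S + 1) * (‖L‖ + 1) := by positivity
          rw [hε]
          rw [div_eq_inv_mul, mul_one]
          calc S * ((((S + 1) * (‖L‖ + 1))⁻¹) * ‖L‖)
              = (S * ‖L‖) * ((S + 1) * (‖L‖ + 1))⁻¹ := by ring
            _ < ((S + 1) * (‖L‖ + 1)) * ((S + 1) * (‖L‖ + 1))⁻¹ := by
                exact mul_lt_mul_of_pos_right h1 (by positivity)
            _ = 1 := mul_inv_cancel₀ h2.ne'
  have hu : ‖-s‖ < 1 := by rwa [norm_neg]
  set u : Bˣ := Units.oneSub (-s) hu with hudef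
  have huval : (u : B) = 1 + s := by simp [hudef, Units.oneSub, sub_neg_eq_add]
  refine ⟨fun i => (↑u⁻¹ : B) * v i, ?_⟩
  have key : ∑ i, v i * f (a i.castSucc + c i * a (Fin.last n)) = 1 + s := by
    have expand : ∀ i : Fin n, v i * f (a i.castSucc + c i * a (Fin.last n)) =
        v i * (f (a i.castSucc) + d i * L) + v i * ((f (c i) - d i) * L) := by
      intro i
      simp only [map_add, map_mul, ← hL]
      noncomm_ring
    rw [Finset.sum_congr rfl fun i _ => expand i, Finset.sum_add_distrib, hv, ← hs]
  calc ∑ i, ((↑u⁻¹ : B) * v i) * f (a i.castSucc + c i * a (Fin.last n))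
      = (↑u⁻¹ : B) * ∑ i, v i * f (a i.castSucc + c i * a (Fin.last n)) := by
        rw [Finset.mul_sum]; exact Finset.sum_congr rfl fun i _ => (mul_assoc _ _ _)
    _ = (↑u⁻¹ : B) * (u : B) := by rw [key, huval]
    _ = 1 := u.inv_mul
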